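/- Let (A, E, s) be a skeletally small extriangulated category whose zero object is (E, s)-simple-like. Then: (i) [M] = [0] in the Grothendieck monoid M(A, E, s) if and only if M is a zero object; (ii) M(A, E, s) is reduced; (iii) if in addition (A, E, s) is weakly idempotent complete, then the assignment [S] ↦ [S] is a bijection from the set of isomorphism classes of (E, s)-simple objects of A onto the set of atoms of M(A, E, s). -/

import Mathlib

/-!
Common axiomatic framework: extriangulated categories in the sense of Nakaoka–Palu,
formalised as a biadditive functor `E` together with a realisation predicate
`IsExtriangle` subject to the axioms (ET1)–(ET4), (ET3)ᵒᵖ, (ET4)ᵒᵖ.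
-/

open CategoryTheory CategoryTheory.Limits ZeroObject

attribute [local instance] CategoryTheory.Limits.hasBinaryBiproducts_of_finite_biproducts

universe v u

namespace ExtriPaper

/-- The data underlying an extriangulated category: a biadditive functor `E` and,
for each extension `δ ∈ E(X, A)`, the predicate picking out the pairs of composable
morphisms `A ⟶ B ⟶ X` belonging to the equivalence class `s(δ)`. -/
structure PreExt (C : Type u) [Category.{v} C] [Preadditive C] where
  E : Cᵒᵖ ⥤ C ⥤ AddCommGrpCat.{v}
  IsExtriangle : ∀ {A B X : C}, (A ⟶ B) → (B ⟶ X) → ↥((E.obj (Opposite.op X)).obj A) → Prop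

namespace PreExt

variable {C : Type u} [Category.{v} C] [Preadditive C]
variable (S : PreExt C)

/-- The group `E(X, A)` of extensions of `X` by `A`. -/
abbrev Ext (X A : C) : Type v := ↥((S.E.obj (Opposite.op X)).obj A)

/-- Pushforward `a_* δ` of an extension along `a : A ⟶ A'`. -/
def push {X A A' : C} (a : A ⟶ A') (δ : S.Ext X A) : S.Ext X A' :=
  (S.E.obj (Opposite.op X)).map a δ

/-- Pullback `c^* δ` of an extension along `c : X' ⟶ X`. -/
def pull {X' X A : C} (c : X' ⟶ X) (δ : S.Ext X A) : S.Ext X' A :=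
  (S.E.map c.op).app A δ

section Axioms

variable [HasZeroObject C] [HasFiniteBiproducts C]

/-- The direct sum `δ ⊕ δ'` of two extensions. -/
noncomputable def sumExt {X X' A A' : C} (δ : S.Ext X A) (δ' : S.Ext X' A') :
    S.Ext (X ⊞ X') (A ⊞ A') :=
  S.push biprod.inl (S.pull biprod.fst δ) + S.push biprod.inr (S.pull biprod.snd δ')

/-- The axioms of an extriangulated category (Nakaoka–Palu): `E` is biadditive,
`s` (encoded by `IsExtriangle`) is an additive realisation defined on equivalence
classes, and the axioms (ET3), (ET3)ᵒᵖ, (ET4), (ET4)ᵒᵖ hold. -/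
structure IsET : Prop where
  /-- Biadditivity of `E` in the covariant variable. -/
  push_add : ∀ {X A A' : C} (a b : A ⟶ A') (δ : S.Ext X A),
      S.push (a + b) δ = S.push a δ + S.push b δ
  /-- Biadditivity of `E` in the contravariant variable. -/
  pull_add : ∀ {X X' A : C} (c d : X' ⟶ X) (δ : S.Ext X A),
      S.pull (c + d) δ = S.pull c δ + S.pull d δ
  /-- Every extension is realised by a pair of composable morphisms. -/
  realize_exists : ∀ {A X : C} (δ : S.Ext X A),
      ∃ (B : C) (f : A ⟶ B) (g : B ⟶ X), S.IsExtriangle f g δ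
  /-- The realisation is closed under equivalence of pairs of composable morphisms. -/
  realize_iso : ∀ {A B B' X : C} {f : A ⟶ B} {g : B ⟶ X} {δ : S.Ext X A} (e : B ≅ B'),
      S.IsExtriangle f g δ → S.IsExtriangle (f ≫ e.hom) (e.inv ≫ g) δ
  /-- Any two realisations of the same extension are equivalent. -/
  realize_unique : ∀ {A B B' X : C} {f : A ⟶ B} {g : B ⟶ X} {f' : A ⟶ B'} {g' : B' ⟶ X}
      {δ : S.Ext X A}, S.IsExtriangle f g δ → S.IsExtriangle f' g' δ →
      ∃ e : B ≅ B', f ≫ e.hom = f' ∧ e.hom ≫ g' = g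
  /-- Morphisms of extensions lift to morphisms of extriangles. -/
  realize_map : ∀ {A B X A' B' X' : C} {f : A ⟶ B} {g : B ⟶ X} {δ : S.Ext X A}
      {f' : A' ⟶ B'} {g' : B' ⟶ X'} {δ' : S.Ext X' A'},
      S.IsExtriangle f g δ → S.IsExtriangle f' g' δ' →
      ∀ (a : A ⟶ A') (c : X ⟶ X'), S.push a δ = S.pull c δ' →
      ∃ b : B ⟶ B', f ≫ b = a ≫ f' ∧ b ≫ g' = g ≫ c
  /-- The zero extension is realised by the split pair. -/
  realize_zero : ∀ (A X : C),
      S.IsExtriangle (biprod.inl : A ⟶ A ⊞ X) (biprod.snd : A ⊞ X ⟶ X) (0 : S.Ext X A)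
  /-- The realisation is additive. -/
  realize_sum : ∀ {A B X A' B' X' : C} {f : A ⟶ B} {g : B ⟶ X} {δ : S.Ext X A}
      {f' : A' ⟶ B'} {g' : B' ⟶ X'} {δ' : S.Ext X' A'},
      S.IsExtriangle f g δ → S.IsExtriangle f' g' δ' →
      S.IsExtriangle (biprod.map f f') (biprod.map g g') (S.sumExt δ δ')
  /-- Axiom (ET3). -/
  et3 : ∀ {A B X A' B' X' : C} {f : A ⟶ B} {g : B ⟶ X} {δ : S.Ext X A}
      {f' : A' ⟶ B'} {g' : B' ⟶ X'} {δ' : S.Ext X' A'},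
      S.IsExtriangle f g δ → S.IsExtriangle f' g' δ' →
      ∀ (a : A ⟶ A') (b : B ⟶ B'), f ≫ b = a ≫ f' →
      ∃ c : X ⟶ X', g ≫ c = b ≫ g' ∧ S.push a δ = S.pull c δ'
  /-- Axiom (ET3)ᵒᵖ. -/
  et3op : ∀ {A B X A' B' X' : C} {f : A ⟶ B} {g : B ⟶ X} {δ : S.Ext X A}
      {f' : A' ⟶ B'} {g' : B' ⟶ X'} {δ' : S.Ext X' A'},
      S.IsExtriangle f g δ → S.IsExtriangle f' g' δ' →
      ∀ (b : B ⟶ B') (c : X ⟶ X'), g ≫ c = b ≫ g' →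
      ∃ a : A ⟶ A', f ≫ b = a ≫ f' ∧ S.push a δ = S.pull c δ'
  /-- Axiom (ET4). -/
  et4 : ∀ {A B D F G : C} {f : A ⟶ B} {f' : B ⟶ D} {δ : S.Ext D A}
      {g : B ⟶ G} {g' : G ⟶ F} {δ' : S.Ext F B},
      S.IsExtriangle f f' δ → S.IsExtriangle g g' δ' →
      ∃ (E₀ : C) (h : G ⟶ E₀) (d : D ⟶ E₀) (e : E₀ ⟶ F) (δ'' : S.Ext E₀ A),
        S.IsExtriangle (f ≫ g) h δ'' ∧
        S.IsExtriangle d e (S.push f' δ') ∧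
        S.pull d δ'' = δ ∧
        S.push f δ'' = S.pull e δ' ∧
        f' ≫ d = g ≫ h ∧ h ≫ e = g'
  /-- Axiom (ET4)ᵒᵖ. -/
  et4op : ∀ {D B A F G : C} {p : D ⟶ B} {f₁ : B ⟶ A} {δ₁ : S.Ext A D}
      {q : F ⟶ G} {g₁ : G ⟶ B} {δ₁' : S.Ext B F},
      S.IsExtriangle p f₁ δ₁ → S.IsExtriangle q g₁ δ₁' →
      ∃ (E₀ : C) (h : E₀ ⟶ G) (d : E₀ ⟶ D) (e : F ⟶ E₀) (δ'' : S.Ext A E₀),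
        S.IsExtriangle h (g₁ ≫ f₁) δ'' ∧
        S.IsExtriangle e d (S.pull p δ₁') ∧
        S.push d δ'' = δ₁ ∧
        S.pull f₁ δ'' = S.push e δ₁' ∧
        d ≫ p = h ≫ g₁ ∧ e ≫ h = q

end Axioms

/-- A morphism is an inflation if it occurs as the first morphism of an extriangle. -/
def IsInflation {A B : C} (f : A ⟶ B) : Prop :=
  ∃ (X : C) (g : B ⟶ X) (δ : S.Ext X A), S.IsExtriangle f g δ

/-- A morphism is a deflation if it occurs as the second morphism of an extriangle. -/
def IsDeflation {B X : C} (g : B ⟶ X) : Prop :=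
  ∃ (A : C) (f : A ⟶ B) (δ : S.Ext X A), S.IsExtriangle f g δ

/-- An isomorphism of extriangles: a triple of isomorphisms compatible with the
structure morphisms and identifying the two extensions. -/
def TriIso {A B X A' B' X' : C} (f : A ⟶ B) (g : B ⟶ X) (δ : S.Ext X A)
    (f' : A' ⟶ B') (g' : B' ⟶ X') (δ' : S.Ext X' A') : Prop :=
  ∃ (iA : A ≅ A') (iB : B ≅ B') (iX : X ≅ X'),
    f ≫ iB.hom = iA.hom ≫ f' ∧ g ≫ iX.hom = iB.hom ≫ g' ∧
    S.push iA.hom δ = S.pull iX.hom δ'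

/-- A chain of `t` composable extriangles: inflations `obj i ⟶ obj (i+1)` each fitting
in an extriangle with cone `factor i`.  This underlies filtrations, inflation series
and composition series alike. -/
structure FChain (t : ℕ) where
  obj : Fin (t + 1) → C
  factor : Fin t → C
  f : ∀ i : Fin t, obj i.castSucc ⟶ obj i.succ
  g : ∀ i : Fin t, obj i.succ ⟶ factor i
  δ : ∀ i : Fin t, S.Ext (factor i) (obj i.castSucc)
  ext : ∀ i : Fin t, S.IsExtriangle (f i) (g i) (δ i)

/-- The composite `obj 0 ⟶ obj i` of the morphisms of a chain. -/
def FChain.comp {t : ℕ} (c : S.FChain t) : ∀ i : Fin (t + 1), c.obj 0 ⟶ c.obj i :=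
  Fin.induction (𝟙 _) (fun i ih => ih ≫ c.f i)

/-- The subcategory `F(P)` of objects admitting a filtration with factors in `P`. -/
def Filt (P : Set C) : Set C :=
  {M | ∃ (t : ℕ) (c : S.FChain t), IsZero (c.obj 0) ∧ c.obj (Fin.last t) = M ∧
      ∀ i, c.factor i ∈ P}

/-- An `(E, s)`-simple object: a non-zero object `M` such that in every extriangle
`A →a M → X ⇢` the inflation `a` is zero or an isomorphism. -/
def SSimple (M : C) : Prop :=
  ¬ IsZero M ∧ ∀ (A X : C) (a : A ⟶ M) (g : M ⟶ X) (δ : S.Ext X A),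
    S.IsExtriangle a g δ → a = 0 ∨ IsIso a

/-- The zero objects of `C` are `(E, s)`-simple-like. -/
def ZeroSimpleLike : Prop :=
  ∀ (A Z X : C) (f : A ⟶ Z) (g : Z ⟶ X) (δ : S.Ext X A),
    IsZero Z → S.IsExtriangle f g δ → IsZero A

/-- `c` is an `(E, s)`-composition series of `M`. -/
def IsCompSeries {t : ℕ} (c : S.FChain t) (M : C) : Prop :=
  IsZero (c.obj 0) ∧ c.obj (Fin.last t) = M ∧ ∀ i, S.SSimple (c.factor i)

/-- `(A, E, s)` is a length extriangulated category. -/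
def LengthCat : Prop :=
  ∀ M : C, (∃ (t : ℕ) (c : S.FChain t), S.IsCompSeries c M) ∧
    ∃ N : ℕ, ∀ (t : ℕ) (c : S.FChain t), S.IsCompSeries c M → t ≤ N

/-- `(A, E, s)` is a Jordan–Hölder extriangulated category: any two composition series
of an object have the same length and, up to a permutation, isomorphic simple factors. -/
def JordanHolder : Prop :=
  ∀ (M : C) (t t' : ℕ) (c : S.FChain t) (c' : S.FChain t'),
    S.IsCompSeries c M → S.IsCompSeries c' M →
    ∃ e : Fin t ≃ Fin t', ∀ i, Nonempty (c.factor i ≅ c'.factor (e i))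

/-- `c` is an `(E, s)`-inflation series of `B`: a filtration of `B` with non-zero factors. -/
def IsInflSeries {t : ℕ} (c : S.FChain t) (B : C) : Prop :=
  IsZero (c.obj 0) ∧ c.obj (Fin.last t) = B ∧ ∀ i, ¬ IsZero (c.factor i)

/-- `X` and `Y` admit isomorphic `(E, s)`-inflation series. -/
def HaveIsoInflSeries (X Y : C) : Prop :=
  ∃ (t : ℕ) (c d : S.FChain t), S.IsInflSeries c X ∧ S.IsInflSeries d Y ∧
    ∃ e : Equiv.Perm (Fin t), ∀ i, Nonempty (c.factor i ≅ d.factor (e i))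

/-- Simplicity of `M` with respect to the extriangulated structure restricted to the
extension-closed subcategory `𝒮`: extriangles of the restricted structure are exactly
the ambient extriangles all of whose terms lie in `𝒮`. -/
def SimpleIn (𝒮 : Set C) (M : C) : Prop :=
  M ∈ 𝒮 ∧ ¬ IsZero M ∧ ∀ (A X : C) (a : A ⟶ M) (g : M ⟶ X) (δ : S.Ext X A),
    A ∈ 𝒮 → X ∈ 𝒮 → S.IsExtriangle a g δ → a = 0 ∨ IsIso a

/-- `c` is a composition series of `M` in the extriangulated structure restricted to `𝒮`. -/
def IsCompSeriesIn (𝒮 : Set C) {t : ℕ} (c : S.FChain t) (M : C) : Prop :=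
  IsZero (c.obj 0) ∧ c.obj (Fin.last t) = M ∧ (∀ i, c.obj i ∈ 𝒮) ∧
    ∀ i, S.SimpleIn 𝒮 (c.factor i)

section Star

variable [HasZeroObject C] [HasFiniteBiproducts C]

/-- The subcategory `P ∗ Q` of objects `Z` admitting an extriangle `X → Z → Y ⇢`
with `X ∈ P` and `Y ∈ Q`. -/
def star (P Q : Set C) : Set C :=
  {Z | ∃ (X Y : C) (f : X ⟶ Z) (g : Z ⟶ Y) (δ : S.Ext Y X),
      X ∈ P ∧ Y ∈ Q ∧ S.IsExtriangle f g δ}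

/-- Iterated `∗` of a list of subcategories (the empty `∗` being the zero objects). -/
def starMany : List (Set C) → Set C
  | [] => {Z | IsZero Z}
  | P :: l => S.star P (starMany l)

end Star

/-- The relative projectives `P(P) = {Z : E(Z, Y) = 0 for all Y ∈ F(P)}`. -/
def projSet (P : Set C) : Set C :=
  {Z | ∀ Y ∈ S.Filt P, ∀ δ : S.Ext Z Y, δ = 0}

/-- `Hom(W, −)` is left exact on the extriangulated structure restricted to `𝒮`:
for every extriangle `A →a B → X ⇢` with all terms in `𝒮`, composition with `a`
is injective on morphisms from `W`. -/
def HomLeftExactOn (W : C) (𝒮 : Set C) : Prop :=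
  ∀ (A B X : C) (a : A ⟶ B) (g : B ⟶ X) (δ : S.Ext X A),
    A ∈ 𝒮 → B ∈ 𝒮 → X ∈ 𝒮 → S.IsExtriangle a g δ →
    ∀ φ ψ : W ⟶ A, φ ≫ a = ψ ≫ a → φ = ψ

/-- The subset of the free abelian group on objects consisting of the defining
relations of the Grothendieck group `K₀(A, E, s)`. -/
def K0Rels : Set (FreeAbelianGroup C) :=
  {x | ∃ (A B X : C) (f : A ⟶ B) (g : B ⟶ X) (δ : S.Ext X A), S.IsExtriangle f g δ ∧
      x = FreeAbelianGroup.of A + FreeAbelianGroup.of X - FreeAbelianGroup.of B} ∪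
  {x | ∃ (X Y : C) (_ : X ≅ Y), x = FreeAbelianGroup.of X - FreeAbelianGroup.of Y}

/-- `[M] = [M']` in the Grothendieck group `K₀(A, E, s)`, the quotient of the free
abelian group on (isomorphism classes of) objects by the extriangle relations. -/
def GrpRel (M M' : C) : Prop :=
  FreeAbelianGroup.of M - FreeAbelianGroup.of M' ∈ AddSubgroup.closure S.K0Rels

end PreExt

/-- The congruence defining the Grothendieck monoid: `MonRel S M M'` holds if and only
if `[M] = [M']` in the Grothendieck monoid `M(A, E, s)`, the quotient of the monoid of
isomorphism classes of objects (under `⊞`) by the congruence generated by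
`[B] ∼ [A] + [X]` for each extriangle `A → B → X ⇢`. -/
inductive MonRel {C : Type u} [Category.{v} C] [Preadditive C] [HasZeroObject C]
    [HasFiniteBiproducts C] (S : PreExt C) : C → C → Prop
  | of {A B X : C} {f : A ⟶ B} {g : B ⟶ X} {δ : S.Ext X A}
      (h : S.IsExtriangle f g δ) : MonRel S B (A ⊞ X)
  | iso {X Y : C} (e : X ≅ Y) : MonRel S X Y
  | symm {X Y : C} : MonRel S X Y → MonRel S Y X
  | trans {X Y Z : C} : MonRel S X Y → MonRel S Y Z → MonRel S X Z
  | add {X Y : C} (Z : C) : MonRel S X Y → MonRel S (X ⊞ Z) (Y ⊞ Z)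

/-- `[M]` is an atom of the Grothendieck monoid `M(A, E, s)`. -/
def IsAtomClass {C : Type u} [Category.{v} C] [Preadditive C] [HasZeroObject C]
    [HasFiniteBiproducts C] (S : PreExt C) (M : C) : Prop :=
  ¬ MonRel S M 0 ∧ ∀ X Y : C, MonRel S M (X ⊞ Y) → MonRel S X 0 ∨ MonRel S Y 0

/-- An additive category is weakly idempotent complete if every retraction admits a kernel. -/
def WeaklyIdemComplete (C : Type u) [Category.{v} C] [Preadditive C] : Prop :=
  ∀ (X Y : C) (r : X ⟶ Y), IsSplitEpi r → HasKernel r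

/-- A set of objects is closed under direct summands. -/
def ClosedSummands {C : Type u} [Category.{v} C] [Preadditive C] [HasZeroObject C]
    [HasFiniteBiproducts C] (P : Set C) : Prop :=
  ∀ (X Y Z : C), Z ∈ P → Nonempty (Z ≅ X ⊞ Y) → X ∈ P

/-- A Krull–Schmidt category: every object is a finite biproduct of objects having
local endomorphism rings. -/
def KrullSchmidtCat (C : Type u) [Category.{v} C] [Preadditive C] [HasZeroObject C]
    [HasFiniteBiproducts C] : Prop :=
  ∀ X : C, ∃ (n : ℕ) (Y : Fin n → C),
    (∀ i, IsLocalRing (End (Y i))) ∧ Nonempty (X ≅ ⨁ Y)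

/-- The closure `add Ψ` of a set of objects under finite direct sums and isomorphisms. -/
def addSet {C : Type u} [Category.{v} C] [Preadditive C] [HasZeroObject C]
    [HasFiniteBiproducts C] (P : Set C) : Set C :=
  {X | ∃ (m : ℕ) (f : Fin m → C), (∀ k, f k ∈ P) ∧ Nonempty (X ≅ ⨁ f)}

/-- An indecomposable object. -/
def Indec {C : Type u} [Category.{v} C] [Preadditive C] [HasZeroObject C]
    [HasFiniteBiproducts C] (X : C) : Prop :=
  ¬ IsZero X ∧ ∀ (Y Z : C), Nonempty (X ≅ Y ⊞ Z) → IsZero Y ∨ IsZero Z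

/-- A morphism `q` is right minimal. -/
def RightMinimal {C : Type u} [Category.{v} C] {X Y : C} (q : X ⟶ Y) : Prop :=
  ∀ g : X ⟶ X, g ≫ q = q → IsIso g

/-- The extra structure making an extriangulated category into an artin `R`-linear
extriangulated category: an `R`-module structure on each `E(X, A)` for which `E` is
`R`-bilinear, with all Hom-sets and all `E(X, A)` of finite length over `R`. -/
structure ArtinLinear {C : Type u} [Category.{v} C] [Preadditive C]
    (R : Type*) [CommRing R] [CategoryTheory.Linear R C] (S : PreExt C) where
  module : ∀ X A : C, Module R (S.Ext X A)
  push_smul : ∀ {X A A' : C} (r : R) (a : A ⟶ A') (δ : S.Ext X A),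
      S.push (r • a) δ = letI := module X A'; r • S.push a δ
  pull_smul : ∀ {X' X A : C} (r : R) (c : X' ⟶ X) (δ : S.Ext X A),
      S.pull (r • c) δ = letI := module X' A; r • S.pull c δ
  homFinite : ∀ X Y : C, IsFiniteLength R (X ⟶ Y)
  extFinite : ∀ X A : C, letI := module X A; IsFiniteLength R (S.Ext X A)

/-- An `E`-stratifying system: a finite family of indecomposable objects subject to
the orthogonality axioms (S1) and (S2). -/
structure IsStratSys {C : Type u} [Category.{v} C] [Preadditive C] [HasZeroObject C]
    [HasFiniteBiproducts C] (S : PreExt C) {n : ℕ} (Φ : Fin n → C) : Prop where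
  indec : ∀ i, Indec (Φ i)
  s1 : ∀ i j : Fin n, i < j → ∀ φ : Φ j ⟶ Φ i, φ = 0
  s2 : ∀ i j : Fin n, i ≤ j → ∀ δ : S.Ext (Φ j) (Φ i), δ = 0

/-- The data of extriangles `K i → Q i → Φ i ⇢η i` with `K i ∈ F(Φ_{j>i})`, as in
axiom (PS2) of a projective `E`-stratifying system. -/
structure ProjData {C : Type u} [Category.{v} C] [Preadditive C]
    (S : PreExt C) {n : ℕ} (Φ Q : Fin n → C) where
  K : Fin n → C
  k : ∀ i, K i ⟶ Q i
  q : ∀ i, Q i ⟶ Φ i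
  η : ∀ i, S.Ext (Φ i) (K i)
  ext : ∀ i, S.IsExtriangle (k i) (q i) (η i)
  kmem : ∀ i, K i ∈ S.Filt (Φ '' {j | i < j})

/-- `(Φ, Q)` is a projective `E`-stratifying system. -/
def IsProjSS {C : Type u} [Category.{v} C] [Preadditive C] [HasZeroObject C]
    [HasFiniteBiproducts C] (S : PreExt C) {n : ℕ} (Φ Q : Fin n → C) : Prop :=
  IsStratSys S Φ ∧ (∀ i j : Fin n, ∀ δ : S.Ext (Q i) (Φ j), δ = 0) ∧
    Nonempty (ProjData S Φ Q)

/-- `(Φ, Q)` is a minimal projective `E`-stratifying system: the morphisms `q i` of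
the extriangles witnessing (PS2) may be chosen right minimal. -/
def IsMinProjSS {C : Type u} [Category.{v} C] [Preadditive C] [HasZeroObject C]
    [HasFiniteBiproducts C] (S : PreExt C) {n : ℕ} (Φ Q : Fin n → C) : Prop :=
  IsStratSys S Φ ∧ (∀ i j : Fin n, ∀ δ : S.Ext (Q i) (Φ j), δ = 0) ∧
    ∃ d : ProjData S Φ Q, ∀ i, RightMinimal (d.q i)

section AuxProofs
set_option linter.unusedSectionVars false

variable {C : Type u} [Category.{v} C] [Preadditive C] [HasZeroObject C]
  [HasFiniteBiproducts C] (S : PreExt C)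

lemma aux_push_push {X A A' A'' : C} (a : A ⟶ A') (a' : A' ⟶ A'') (δ : S.Ext X A) :
    S.push a' (S.push a δ) = S.push (a ≫ a') δ := by
  show (S.E.obj (Opposite.op X)).map a' ((S.E.obj (Opposite.op X)).map a δ)
    = (S.E.obj (Opposite.op X)).map (a ≫ a') δ
  rw [Functor.map_comp]; rfl

lemma aux_pull_pull {X' X'' X A : C} (c : X' ⟶ X'') (c' : X'' ⟶ X) (δ : S.Ext X A) :
    S.pull c (S.pull c' δ) = S.pull (c ≫ c') δ := by
  show (S.E.map c.op).app A ((S.E.map c'.op).app A δ) = (S.E.map (c ≫ c').op).app A δ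
  rw [op_comp, Functor.map_comp]; rfl

lemma aux_push_id {X A : C} (δ : S.Ext X A) : S.push (𝟙 A) δ = δ := by
  show (S.E.obj (Opposite.op X)).map (𝟙 A) δ = δ
  rw [CategoryTheory.Functor.map_id]; rfl

lemma aux_pull_id {X A : C} (δ : S.Ext X A) : S.pull (𝟙 X) δ = δ := by
  show (S.E.map (𝟙 X).op).app A δ = δ
  rw [op_id, CategoryTheory.Functor.map_id]; rfl

lemma aux_push_ext_zero {X A A' : C} (a : A ⟶ A') : S.push a (0 : S.Ext X A) = 0 := by
  show (S.E.obj (Opposite.op X)).map a 0 = 0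
  simp

lemma aux_pull_ext_zero {X' X A : C} (c : X' ⟶ X) : S.pull c (0 : S.Ext X A) = 0 := by
  show (S.E.map c.op).app A 0 = 0
  simp

lemma aux_push_zero_hom (hS : S.IsET) {X A A' : C} (δ : S.Ext X A) :
    S.push (0 : A ⟶ A') δ = 0 := by
  have h := hS.push_add (0 : A ⟶ A') 0 δ
  rw [add_zero] at h
  exact left_eq_add.mp h

lemma aux_pull_zero_hom (hS : S.IsET) {X' X A : C} (δ : S.Ext X A) :
    S.pull (0 : X' ⟶ X) δ = 0 := by
  have h := hS.pull_add (0 : X' ⟶ X) 0 δ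
  rw [add_zero] at h
  exact left_eq_add.mp h

lemma aux_ext_zero_of_src (hS : S.IsET) {X A : C} (hA : IsZero A) (δ : S.Ext X A) : δ = 0 := by
  have h1 : S.push (𝟙 A) δ = δ := aux_push_id S δ
  rw [hA.eq_of_src (𝟙 A) 0, aux_push_zero_hom S hS] at h1
  exact h1.symm

lemma aux_ext_zero_of_tgt (hS : S.IsET) {X A : C} (hX : IsZero X) (δ : S.Ext X A) : δ = 0 := by
  have h1 : S.pull (𝟙 X) δ = δ := aux_pull_id S δ
  rw [hX.eq_of_src (𝟙 X) 0, aux_pull_zero_hom S hS] at h1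
  exact h1.symm

lemma aux_split_iso (hS : S.IsET) {A B X : C} {f : A ⟶ B} {g : B ⟶ X} {δ : S.Ext X A}
    (h : S.IsExtriangle f g δ) (h0 : δ = 0) :
    ∃ j : B ≅ A ⊞ X, f ≫ j.hom = biprod.inl ∧ j.hom ≫ biprod.snd = g := by
  subst h0
  obtain ⟨e, he1, he2⟩ := hS.realize_unique h (hS.realize_zero A X)
  exact ⟨e, he1, he2⟩

lemma aux_pull_deflation (hS : S.IsET) {A B X : C} {f : A ⟶ B} {g : B ⟶ X} {δ : S.Ext X A}
    (h : S.IsExtriangle f g δ) : S.pull g δ = 0 := by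
  obtain ⟨a, -, ha⟩ := hS.et3op (hS.realize_zero A B) h biprod.snd g rfl
  rw [aux_push_ext_zero] at ha
  exact ha.symm

lemma aux_push_inflation (hS : S.IsET) {A B X : C} {f : A ⟶ B} {g : B ⟶ X} {δ : S.Ext X A}
    (h : S.IsExtriangle f g δ) : S.push f δ = 0 := by
  obtain ⟨c, -, hc⟩ := hS.et3 h (hS.realize_zero B X) f biprod.inl rfl
  rw [aux_pull_ext_zero] at hc
  exact hc

lemma aux_factor_right (hS : S.IsET) {A B X : C} {f : A ⟶ B} {g : B ⟶ X} {δ : S.Ext X A}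
    (h : S.IsExtriangle f g δ) {Y : C} (u : B ⟶ Y) (hu : f ≫ u = 0) :
    ∃ c : X ⟶ Y, g ≫ c = u := by
  obtain ⟨c, hc, -⟩ := hS.et3 h (hS.realize_zero A Y) 0 (biprod.lift 0 u)
    (by apply biprod.hom_ext <;> simp [hu])
  exact ⟨c, by simpa using hc⟩

lemma aux_factor_left (hS : S.IsET) {A B X : C} {f : A ⟶ B} {g : B ⟶ X} {δ : S.Ext X A}
    (h : S.IsExtriangle f g δ) {Y : C} (v : Y ⟶ B) (hv : v ≫ g = 0) :
    ∃ a : Y ⟶ A, a ≫ f = v := by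
  obtain ⟨a, ha, -⟩ := hS.et3op (hS.realize_zero Y B) h (biprod.desc v (𝟙 B)) g
    (by apply biprod.hom_ext' <;> simp [hv])
  exact ⟨a, by simpa using ha.symm⟩

lemma aux_isZero_right_of_isIso_inl {X Z : C} (h : IsIso (biprod.inl : X ⟶ X ⊞ Z)) :
    IsZero Z := by
  haveI := h
  haveI : IsIso ((biprod.inl : X ⟶ X ⊞ Z) ≫ biprod.fst) := by
    rw [biprod.inl_fst]; infer_instance
  haveI : IsIso (biprod.fst : X ⊞ Z ⟶ X) :=
    IsIso.of_isIso_comp_left (biprod.inl : X ⟶ X ⊞ Z) biprod.fst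
  have hinr : (biprod.inr : Z ⟶ X ⊞ Z) = 0 := by
    have h0 : (biprod.inr : Z ⟶ X ⊞ Z) ≫ biprod.fst = (0 : Z ⟶ X ⊞ Z) ≫ biprod.fst := by simp
    exact (cancel_mono biprod.fst).mp h0
  rw [IsZero.iff_id_eq_zero, ← biprod.inr_snd, hinr, zero_comp]

lemma aux_isZero_cone_of_isIso (hS : S.IsET) {A B X : C} {f : A ⟶ B} {g : B ⟶ X}
    {δ : S.Ext X A} (h : S.IsExtriangle f g δ) (hf : IsIso f) : IsZero X := by
  haveI := hf
  have h0 : δ = 0 := by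
    have hd : S.push (inv f) (S.push f δ) = δ := by
      rw [aux_push_push, IsIso.hom_inv_id, aux_push_id]
    rw [← hd, aux_push_inflation S hS h, aux_push_ext_zero]
  obtain ⟨j, hj, -⟩ := aux_split_iso S hS h h0
  apply aux_isZero_right_of_isIso_inl (X := A)
  rw [← hj]; infer_instance

lemma aux_isIso_inflation_of_isZero_cone (hS : S.IsET) {A B X : C} {f : A ⟶ B} {g : B ⟶ X}
    {δ : S.Ext X A} (h : S.IsExtriangle f g δ) (hX : IsZero X) : IsIso f := by
  have h0 : δ = 0 := aux_ext_zero_of_tgt S hS hX δ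
  obtain ⟨j, hj, -⟩ := aux_split_iso S hS h h0
  haveI : IsIso (biprod.inl : A ⟶ A ⊞ X) := by
    refine ⟨⟨biprod.fst, biprod.inl_fst, ?_⟩⟩
    apply biprod.hom_ext
    · simp
    · apply hX.eq_of_tgt
  have hf : f = biprod.inl ≫ j.inv := by rw [← hj]; simp
  rw [hf]; infer_instance

lemma aux_simple_indec (hS : S.IsET) {T X Z : C} (hT : S.SSimple T) (i : X ⊞ Z ≅ T) :
    IsZero X ∨ IsZero Z := by
  have hext := hS.realize_iso i (hS.realize_zero X Z)
  rcases hT.2 X Z (biprod.inl ≫ i.hom) (i.inv ≫ biprod.snd) 0 hext with h0 | hiso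
  · left
    have hinl : (biprod.inl : X ⟶ X ⊞ Z) = 0 := by
      have : (biprod.inl ≫ i.hom) ≫ i.inv = 0 ≫ i.inv := by rw [h0]
      simpa using this
    rw [IsZero.iff_id_eq_zero, ← biprod.inl_fst, hinl, zero_comp]
  · right
    haveI := hiso
    haveI : IsIso (biprod.inl : X ⟶ X ⊞ Z) :=
      IsIso.of_isIso_comp_right biprod.inl i.hom
    exact aux_isZero_right_of_isIso_inl ‹_›

lemma aux_key_zero_inflation (hS : S.IsET) (hz : S.ZeroSimpleLike)
    (hw : WeaklyIdemComplete C) {A B X : C} {g : B ⟶ X} {δ : S.Ext X A}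
    (hδ : S.IsExtriangle (0 : A ⟶ B) g δ) : IsZero A := by
  obtain ⟨r, hr⟩ := aux_factor_right S hS hδ (𝟙 B) (by simp)
  haveI : HasKernel r := hw X B r ⟨⟨⟨g, hr⟩⟩⟩
  set ι : kernel r ⟶ X := kernel.ι r with hιdef
  have hq0 : (𝟙 X - r ≫ g) ≫ r = 0 := by
    rw [Preadditive.sub_comp, Category.id_comp, Category.assoc, hr, Category.comp_id, sub_self]
  set q : X ⟶ kernel r := kernel.lift r (𝟙 X - r ≫ g) hq0 with hqdef
  have hqι : q ≫ ι = 𝟙 X - r ≫ g := kernel.lift_ι r _ hq0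
  have hιq : ι ≫ q = 𝟙 (kernel r) := by
    rw [← cancel_mono ι, Category.assoc, hqι, Category.id_comp, Preadditive.comp_sub,
      Category.comp_id, ← Category.assoc, kernel.condition, zero_comp, sub_zero]
  obtain ⟨M, m, e, hε⟩ := hS.realize_exists (S.pull ι δ)
  have hpull : S.pull q (S.pull ι δ) = δ := by
    rw [aux_pull_pull, hqι]
    have h2 : S.pull (r ≫ g) δ = 0 := by
      rw [← aux_pull_pull, aux_pull_deflation S hS hδ, aux_pull_ext_zero]
    have h3 := hS.pull_add (𝟙 X - r ≫ g) (r ≫ g) δ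
    rw [show 𝟙 X - r ≫ g + r ≫ g = 𝟙 X by abel, aux_pull_id, h2, add_zero] at h3
    exact h3.symm
  obtain ⟨b', hb'1, hb'2⟩ := hS.realize_map hδ hε (𝟙 A) q
    (by rw [aux_push_id, hpull])
  have hm : m = 0 := by simpa using hb'1.symm
  obtain ⟨b, hb1, hb2⟩ := hS.realize_map hε hδ (𝟙 A) ι (by rw [aux_push_id])
  have hbb' : b ≫ b' = 𝟙 M := by
    have h1 : (b ≫ b' - 𝟙 M) ≫ e = 0 := by
      rw [Preadditive.sub_comp, Category.assoc, hb'2, ← Category.assoc, hb2, Category.assoc,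
        hιq, Category.comp_id, Category.id_comp, sub_self]
    obtain ⟨a, ha⟩ := aux_factor_left S hS hε _ h1
    rw [hm, comp_zero] at ha
    have := ha.symm
    rwa [sub_eq_zero] at this
  have hb'b : b' ≫ b = 0 := by
    have h2 : (b' ≫ b) ≫ g = 0 := by
      rw [Category.assoc, hb2, ← Category.assoc, hb'2, Category.assoc, hqι, Preadditive.comp_sub,
        Category.comp_id, ← Category.assoc, hr, Category.id_comp, sub_self]
    obtain ⟨a, ha⟩ := aux_factor_left S hS hδ _ h2
    rw [comp_zero] at ha
    exact ha.symm
  have hM : IsZero M := by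
    rw [IsZero.iff_id_eq_zero]
    calc 𝟙 M = (b ≫ b') ≫ b ≫ b' := by rw [hbb', Category.comp_id]
      _ = b ≫ (b' ≫ b) ≫ b' := by simp only [Category.assoc]
      _ = 0 := by rw [hb'b, zero_comp, comp_zero]
  exact hz A M (kernel r) m e (S.pull ι δ) hM hε

lemma aux_monrel_isZero_iff (hS : S.IsET) (hz : S.ZeroSimpleLike) {M N : C}
    (h : MonRel S M N) : IsZero M ↔ IsZero N := by
  induction h with
  | @of A B X f g δ h =>
    rw [biprod_isZero_iff]
    constructor
    · intro hB
      have hA : IsZero A := hz A B X f g δ hB h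
      have h0 : δ = 0 := aux_ext_zero_of_src S hS hA δ
      obtain ⟨j, -, -⟩ := aux_split_iso S hS h h0
      have hAX : IsZero (A ⊞ X) := IsZero.of_iso hB j.symm
      rw [biprod_isZero_iff] at hAX
      exact hAX
    · rintro ⟨hA, hX⟩
      have h0 : δ = 0 := aux_ext_zero_of_src S hS hA δ
      obtain ⟨j, -, -⟩ := aux_split_iso S hS h h0
      exact IsZero.of_iso ((biprod_isZero_iff A X).mpr ⟨hA, hX⟩) j
  | iso e => exact ⟨fun h => IsZero.of_iso h e.symm, fun h => IsZero.of_iso h e⟩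
  | symm _ ih => exact ih.symm
  | trans _ _ ih1 ih2 => exact ih1.trans ih2
  | @add X Y Z _ ih =>
    rw [biprod_isZero_iff, biprod_isZero_iff, ih]

lemma aux_monrel_simple_iff (hS : S.IsET) (hz : S.ZeroSimpleLike)
    (hw : WeaklyIdemComplete C) {M N : C} (h : MonRel S M N) :
    ∀ T : C, S.SSimple T → (Nonempty (M ≅ T) ↔ Nonempty (N ≅ T)) := by
  induction h with
  | @of A B X f g δ h =>
    intro T hT
    constructor
    · rintro ⟨i⟩
      have hext := hS.realize_iso i h
      rcases hT.2 A X (f ≫ i.hom) (i.inv ≫ g) δ hext with h0 | hiso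
      · have hf : f = 0 := by
          have : (f ≫ i.hom) ≫ i.inv = 0 ≫ i.inv := by rw [h0]
          simpa using this
        have hA : IsZero A := aux_key_zero_inflation S hS hz hw (hf ▸ h)
        have h0' : δ = 0 := aux_ext_zero_of_src S hS hA δ
        obtain ⟨j, -, -⟩ := aux_split_iso S hS h h0'
        exact ⟨j.symm ≪≫ i⟩
      · haveI := hiso
        haveI : IsIso f := IsIso.of_isIso_comp_right f i.hom
        have hX : IsZero X := aux_isZero_cone_of_isIso S hS h ‹IsIso f›
        exact ⟨(isoBiprodZero hX).symm ≪≫ asIso f ≪≫ i⟩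
    · rintro ⟨i⟩
      have h0 : δ = 0 := by
        rcases aux_simple_indec S hS hT i with hA | hX
        · exact aux_ext_zero_of_src S hS hA δ
        · exact aux_ext_zero_of_tgt S hS hX δ
      obtain ⟨j, -, -⟩ := aux_split_iso S hS h h0
      exact ⟨j ≪≫ i⟩
  | iso e =>
    intro T hT
    exact ⟨fun ⟨i⟩ => ⟨e.symm ≪≫ i⟩, fun ⟨i⟩ => ⟨e ≪≫ i⟩⟩
  | symm _ ih => intro T hT; exact (ih T hT).symm
  | trans _ _ ih1 ih2 => intro T hT; exact (ih1 T hT).trans (ih2 T hT)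
  | @add X Y Z hXY ih =>
    intro T hT
    have hziff : IsZero X ↔ IsZero Y := aux_monrel_isZero_iff S hS hz hXY
    constructor
    · rintro ⟨i⟩
      rcases aux_simple_indec S hS hT i with hX | hZ
      · have hY : IsZero Y := hziff.mp hX
        exact ⟨(isoZeroBiprod hY).symm ≪≫ isoZeroBiprod hX ≪≫ i⟩
      · obtain ⟨j⟩ := (ih T hT).mp ⟨isoBiprodZero hZ ≪≫ i⟩
        exact ⟨(isoBiprodZero hZ).symm ≪≫ j⟩
    · rintro ⟨i⟩
      rcases aux_simple_indec S hS hT i with hY | hZ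
      · have hX : IsZero X := hziff.mpr hY
        exact ⟨(isoZeroBiprod hX).symm ≪≫ isoZeroBiprod hY ≪≫ i⟩
      · obtain ⟨j⟩ := (ih T hT).mpr ⟨isoBiprodZero hZ ≪≫ i⟩
        exact ⟨(isoBiprodZero hZ).symm ≪≫ j⟩

end AuxProofs

section Statements

variable {C : Type u} [Category.{v} C] [Preadditive C] [HasZeroObject C] [HasFiniteBiproducts C]

theorem stmt9 (S : PreExt C) (hS : S.IsET) [EssentiallySmall.{v} C]
    (hzero : S.ZeroSimpleLike) :
    (∀ M : C, MonRel S M 0 ↔ IsZero M) ∧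
    (∀ X Y : C, MonRel S (X ⊞ Y) 0 → MonRel S X 0 ∧ MonRel S Y 0) ∧
    (WeaklyIdemComplete C →
      (∀ M : C, S.SSimple M → IsAtomClass S M) ∧
      (∀ M M' : C, S.SSimple M → S.SSimple M' → MonRel S M M' → Nonempty (M ≅ M')) ∧
      (∀ A : C, IsAtomClass S A → ∃ M : C, S.SSimple M ∧ MonRel S A M)) := by
  have zpart : ∀ M : C, MonRel S M 0 ↔ IsZero M := fun M =>
    ⟨fun h => (aux_monrel_isZero_iff S hS hzero h).mpr (isZero_zero C),
     fun h => MonRel.iso h.isoZero⟩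
  refine ⟨zpart, ?_, ?_⟩
  · intro X Y h
    have hXY : IsZero (X ⊞ Y) := (zpart _).mp h
    rw [biprod_isZero_iff] at hXY
    exact ⟨(zpart X).mpr hXY.1, (zpart Y).mpr hXY.2⟩
  · intro hw
    refine ⟨?_, ?_, ?_⟩
    · intro M hM
      constructor
      · intro h
        exact hM.1 ((zpart M).mp h)
      · intro X Y h
        obtain ⟨i⟩ := (aux_monrel_simple_iff S hS hzero hw h M hM).mp ⟨Iso.refl M⟩
        rcases aux_simple_indec S hS hM i with h1 | h2
        · exact Or.inl ((zpart X).mpr h1)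
        · exact Or.inr ((zpart Y).mpr h2)
    · intro M M' hM hM' h
      obtain ⟨i⟩ := (aux_monrel_simple_iff S hS hzero hw h M hM).mp ⟨Iso.refl M⟩
      exact ⟨i.symm⟩
    · intro A hA
      refine ⟨A, ⟨?_, ?_⟩, MonRel.iso (Iso.refl A)⟩
      · intro h
        exact hA.1 ((zpart A).mpr h)
      · intro B X a g δ hext
        rcases hA.2 B X (MonRel.of hext) with h | h
        · exact Or.inl (((zpart B).mp h).eq_of_src a 0)
        · exact Or.inr (aux_isIso_inflation_of_isZero_cone S hS hext ((zpart X).mp h))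

end Statements

end ExtriPaper
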